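/- Let k, m ≥ 3 and let G be a linear k-partite k-uniform hypergraph. Suppose v₁, …, v_{(k-1)m} is a sequence of vertices of G (not necessarily distinct) such that the sets e_i := {v_{(k-1)(i-1)+1}, …, v_{(k-1)i+1}} for i = 1, …, m (indices modulo (k-1)m) are m pairwise distinct edges of G. Then G contains a loose cycle of length at most m. -/

import Mathlib

/-- A `k`-uniform hypergraph with edge set `E` contains a loose `ℓ`-cycle: a sequence of
`(k-1)ℓ` distinct vertices, indexed cyclically, such that each of the `ℓ` blocks of `k`
consecutive vertices (consecutive blocks overlapping in one vertex) forms an edge. -/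
def HasLooseCycle {V : Type*} [DecidableEq V] (k : ℕ) (E : Finset (Finset V))
    (ℓ : ℕ) : Prop :=
  ∃ w : ZMod ((k - 1) * ℓ) → V, Function.Injective w ∧
    ∀ i : Fin ℓ,
      (Finset.univ.image fun j : Fin k =>
        w ((((k - 1) * (i : ℕ) + (j : ℕ) : ℕ)) : ZMod ((k - 1) * ℓ))) ∈ E

section Aux

variable {V : Type*} [Fintype V] [DecidableEq V]

lemma swap_val {k : ℕ} (a b : ℕ) (ha : a < k) (hb : b < k) (s : Fin k) :
    ((Equiv.swap (⟨a, ha⟩ : Fin k) ⟨b, hb⟩ s : Fin k) : ℕ)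
      = if (s : ℕ) = a then b else if (s : ℕ) = b then a else (s : ℕ) := by
  rw [Equiv.swap_apply_def]
  simp only [Fin.ext_iff]
  split_ifs <;> rfl

lemma block_inj {k N : ℕ} {E : Finset (Finset V)}
    (hcard : ∀ e ∈ E, e.card = k) {v : ZMod N → V} {b : ℕ}
    (hb : (Finset.univ.image fun u : Fin k => v ((b + (u : ℕ) : ℕ) : ZMod N)) ∈ E) :
    Function.Injective fun u : Fin k => v ((b + (u : ℕ) : ℕ) : ZMod N) := by
  have h1 : (Finset.univ.image fun u : Fin k => v ((b + (u : ℕ) : ℕ) : ZMod N)).card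
      = (Finset.univ : Finset (Fin k)).card := by
    rw [hcard _ hb, Finset.card_univ, Fintype.card_fin]
  have h2 := Finset.card_image_iff.mp h1
  rw [Finset.coe_univ] at h2
  exact Set.injOn_univ.mp h2

lemma aux_main (k : ℕ) (hk : 3 ≤ k) (E : Finset (Finset V))
    (hlin : ∀ e ∈ E, ∀ f ∈ E, e ≠ f → (e ∩ f).card ≤ 1)
    (hcard : ∀ e ∈ E, e.card = k) :
    ∀ m : ℕ, 3 ≤ m → ∀ v : ZMod ((k - 1) * m) → V,
      (∀ i : Fin m, (Finset.univ.image fun j : Fin k =>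
          v ((((k - 1) * (i : ℕ) + (j : ℕ) : ℕ)) : ZMod ((k - 1) * m))) ∈ E) →
      (∀ i i' : Fin m, i ≠ i' →
        (Finset.univ.image fun j : Fin k =>
            v ((((k - 1) * (i : ℕ) + (j : ℕ) : ℕ)) : ZMod ((k - 1) * m)))
          ≠ (Finset.univ.image fun j : Fin k =>
            v ((((k - 1) * (i' : ℕ) + (j : ℕ) : ℕ)) : ZMod ((k - 1) * m)))) →
      ∃ ℓ : ℕ, 3 ≤ ℓ ∧ ℓ ≤ m ∧ HasLooseCycle k E ℓ := by
  intro m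
  induction m using Nat.strong_induction_on with
  | _ m IH =>
    intro hm v hseq hdist
    have hk1 : 2 ≤ k - 1 := by omega
    have hN : 0 < (k - 1) * m := Nat.mul_pos (by omega) (by omega)
    haveI : NeZero ((k - 1) * m) := ⟨hN.ne'⟩
    by_cases hv : Function.Injective v
    · exact ⟨m, hm, le_refl m, v, hv, hseq⟩
    rw [Function.not_injective_iff] at hv
    obtain ⟨p, q, hvpq, hpq⟩ := hv
    -- basic congruence for blocks
    have hmod : ∀ c u : ℕ, (((k-1) * c + u : ℕ) : ZMod ((k-1)*m))
        = (((k-1) * (c % m) + u : ℕ) : ZMod ((k-1)*m)) := by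
      intro c u
      rw [ZMod.natCast_eq_natCast_iff]
      exact ((Nat.mod_modEq c m).symm.mul_left' (k-1)).add_right u
    have hseqAll : ∀ c : ℕ, (Finset.univ.image fun u : Fin k =>
        v (((k-1) * c + (u : ℕ) : ℕ) : ZMod ((k-1)*m))) ∈ E := by
      intro c
      have he : (fun u : Fin k => v (((k-1) * c + (u : ℕ) : ℕ) : ZMod ((k-1)*m)))
          = fun u : Fin k => v (((k-1) * (c % m) + (u : ℕ) : ℕ) : ZMod ((k-1)*m)) := by
        funext u; rw [hmod]
      rw [he]
      exact hseq ⟨c % m, Nat.mod_lt _ (by omega)⟩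
    have binj : ∀ c : ℕ, ∀ u1 u2 : Fin k,
        v (((k-1) * c + (u1 : ℕ) : ℕ) : ZMod ((k-1)*m))
          = v (((k-1) * c + (u2 : ℕ) : ℕ) : ZMod ((k-1)*m)) → u1 = u2 :=
      fun c u1 u2 h => block_inj hcard (hseqAll c) h
    -- pairwise distinct blocks, over ℕ indices
    have hdistAll : ∀ c c' : ℕ, c < m → c' < m → c ≠ c' →
        (Finset.univ.image fun u : Fin k =>
            v (((k-1) * c + (u : ℕ) : ℕ) : ZMod ((k-1)*m)))
          ≠ (Finset.univ.image fun u : Fin k =>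
            v (((k-1) * c' + (u : ℕ) : ℕ) : ZMod ((k-1)*m))) := by
      intro c c' hc hc' hne
      exact hdist ⟨c, hc⟩ ⟨c', hc'⟩ (by simpa [Fin.ext_iff] using hne)
    -- decompose p
    have hpval : p.val < (k-1)*m := ZMod.val_lt p
    set i := p.val / (k-1) with hidef
    set j := p.val % (k-1) with hjdef
    have hidec : (k-1) * i + j = p.val := Nat.div_add_mod p.val (k-1)
    have hjlt : j < k - 1 := Nat.mod_lt _ (by omega)
    have hilt : i < m := by
      by_contra h
      push_neg at h
      have := Nat.mul_le_mul_left (k-1) h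
      omega
    have hpcast : (((k-1) * i + j : ℕ) : ZMod ((k-1)*m)) = p := by
      rw [hidec]; exact ZMod.natCast_rightInverse p
    -- decompose q with offset in [1, k-1]
    obtain ⟨i'', j'', hi''lt, hj''1, hj''2, hqcast⟩ :
        ∃ i'' j'' : ℕ, i'' < m ∧ 1 ≤ j'' ∧ j'' ≤ k - 1 ∧
          (((k-1) * i'' + j'' : ℕ) : ZMod ((k-1)*m)) = q := by
      have hqval : q.val < (k-1)*m := ZMod.val_lt q
      have hqdec : (k-1) * (q.val / (k-1)) + q.val % (k-1) = q.val :=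
        Nat.div_add_mod q.val (k-1)
      have hqi : q.val / (k-1) < m := by
        by_contra h
        push_neg at h
        have := Nat.mul_le_mul_left (k-1) h
        omega
      by_cases h0 : q.val % (k-1) = 0
      · refine ⟨(q.val / (k-1) + (m-1)) % m, k-1, Nat.mod_lt _ (by omega), by omega,
          le_refl _, ?_⟩
        conv_rhs => rw [← ZMod.natCast_rightInverse q]
        rw [ZMod.natCast_eq_natCast_iff]
        have h1 : (q.val / (k-1) + (m-1)) % m + 1 ≡ q.val / (k-1) [MOD m] := by
          calc (q.val / (k-1) + (m-1)) % m + 1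
              ≡ (q.val / (k-1) + (m-1)) + 1 [MOD m] := (Nat.mod_modEq _ m).add_right 1
            _ = q.val / (k-1) + m := by omega
            _ ≡ q.val / (k-1) [MOD m] := by
                simpa using (Nat.add_modEq_right (n := m) (a := q.val / (k-1)))
        have h2 := h1.mul_left' (k-1)
        have h3 : (k-1) * ((q.val / (k-1) + (m-1)) % m + 1)
            = (k-1) * ((q.val / (k-1) + (m-1)) % m) + (k-1) := by ring
        rw [h3] at h2
        have h4 : (k-1) * (q.val / (k-1)) = q.val := by omega
        rw [h4] at h2
        exact h2
      · refine ⟨q.val / (k-1), q.val % (k-1), hqi, by omega,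
          le_of_lt (Nat.mod_lt _ (by omega)), ?_⟩
        rw [hqdec]; exact ZMod.natCast_rightInverse q
    -- the repeated vertex, in two block positions
    have hxq : v (((k-1) * i + j : ℕ) : ZMod ((k-1)*m))
        = v (((k-1) * i'' + j'' : ℕ) : ZMod ((k-1)*m)) := by
      rw [hpcast, hqcast]; exact hvpq
    set d := (i'' + m - i) % m with hddef
    have hdlt : d < m := Nat.mod_lt _ (by omega)
    have hd0 : (i + d) % m = i'' := by
      have h1 : i + d ≡ i + (i'' + m - i) [MOD m] :=
        (Nat.mod_modEq (i'' + m - i) m).add_left i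
      have h2 : i + (i'' + m - i) = i'' + m := by omega
      have h3 : (i'' + m) % m = i'' := by
        rw [Nat.add_mod_right]; exact Nat.mod_eq_of_lt hi''lt
      unfold Nat.ModEq at h1
      rw [h2, h3] at h1
      exact h1
    -- local notation for blocks
    set B : ℕ → Finset V := fun c => Finset.univ.image
      (fun u : Fin k => v (((k-1) * c + (u : ℕ) : ℕ) : ZMod ((k-1) * m))) with hB
    have memB : ∀ c u : ℕ, u < k → v (((k-1) * c + u : ℕ) : ZMod ((k-1) * m)) ∈ B c := by
      intro c u hu
      simp only [hB]
      exact Finset.mem_image.mpr ⟨⟨u, hu⟩, Finset.mem_univ _, rfl⟩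
    have hBseq : ∀ c : ℕ, B c ∈ E := fun c => hseqAll c
    have hBdist : ∀ c c' : ℕ, c < m → c' < m → c ≠ c' → B c ≠ B c' :=
      fun c c' hc hc' hne => hdistAll c c' hc hc' hne
    have hjunc : ∀ c : ℕ, (((k-1) * c + (k-1) : ℕ) : ZMod ((k-1) * m))
        = (((k-1) * (c + 1) + 0 : ℕ) : ZMod ((k-1) * m)) := by
      intro c
      rw [show (k-1) * (c + 1) + 0 = (k-1) * c + (k-1) from by ring]
    have htwo : ∀ c c' : ℕ, c < m → c' < m → c ≠ c' → ∀ x y : V,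
        x ∈ B c → x ∈ B c' → y ∈ B c → y ∈ B c' → x ≠ y → False := by
      intro c c' hc hc' hne x y hx1 hx2 hy1 hy2 hxy
      have h1 := hlin _ (hBseq c) _ (hBseq c') (hBdist c c' hc hc' hne)
      have h2 : 1 < ((B c) ∩ (B c')).card :=
        Finset.one_lt_card.mpr ⟨x, Finset.mem_inter.mpr ⟨hx1, hx2⟩,
          y, Finset.mem_inter.mpr ⟨hy1, hy2⟩, hxy⟩
      omega
    -- d ≠ 0
    have hne0 : d ≠ 0 := by
      intro h
      have hii : i = i'' := by
        rw [h, Nat.add_zero, Nat.mod_eq_of_lt hilt] at hd0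
        exact hd0
      rw [← hii] at hxq
      have hj : (⟨j, by omega⟩ : Fin k) = ⟨j'', by omega⟩ := binj i _ _ hxq
      have hjj : j = j'' := by simpa [Fin.ext_iff] using hj
      apply hpq
      rw [← hpcast, ← hqcast, hjj, hii]
    -- d ≠ 1
    have hne1 : d ≠ 1 := by
      intro h
      have hi2 : (i + 1) % m = i'' := by rw [← hd0, h]
      have hne : i ≠ (i + 1) % m := by
        intro he
        rcases Nat.lt_or_ge (i + 1) m with h1 | h1
        · rw [Nat.mod_eq_of_lt h1] at he; omega
        · have h2 : i + 1 = m := by omega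
          rw [h2, Nat.mod_self] at he; omega
      refine htwo i ((i + 1) % m) hilt (Nat.mod_lt _ (by omega)) hne
        (v (((k-1) * i + j : ℕ) : ZMod ((k-1) * m)))
        (v (((k-1) * i + (k-1) : ℕ) : ZMod ((k-1) * m)))
        (memB i j (by omega)) ?_ (memB i (k-1) (by omega)) ?_ ?_
      · rw [hxq, ← hi2]
        exact memB _ j'' (by omega)
      · rw [hjunc i, hmod (i + 1) 0]
        exact memB _ 0 (by omega)
      · intro hcon
        have := binj i ⟨j, by omega⟩ ⟨k-1, by omega⟩ hcon
        simp [Fin.ext_iff] at this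
        omega
    -- d ≠ m - 1
    have hnem1 : d ≠ m - 1 := by
      intro h
      have hii : i ≠ i'' := by
        intro he
        rw [hddef, he] at h
        rw [show i'' + m - i'' = m by omega, Nat.mod_self] at h
        omega
      have hi2 : (i'' + 1) % m = i := by
        have h1 : i'' + 1 ≡ i + (m - 1) + 1 [MOD m] := by
          rw [← hd0, h]
          exact (Nat.mod_modEq (i + (m - 1)) m).add_right 1
        have h2 : i + (m - 1) + 1 = i + m := by omega
        rw [h2] at h1
        have h3 : i + m ≡ i [MOD m] := Nat.add_modEq_right
        have h4 := h1.trans h3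
        unfold Nat.ModEq at h4
        rw [Nat.mod_eq_of_lt hilt] at h4
        exact h4
      by_cases hj2 : j'' = (k-1)
      · -- x is the junction between blocks i'' and i: forces p = q
        have hx0 : v (((k-1) * i + j : ℕ) : ZMod ((k-1) * m))
            = v (((k-1) * i + 0 : ℕ) : ZMod ((k-1) * m)) := by
          rw [hxq, hj2, hjunc i'', hmod (i'' + 1) 0, hi2]
        have hj0 : j = 0 := by
          have := binj i ⟨j, by omega⟩ ⟨0, by omega⟩ hx0
          simpa [Fin.ext_iff] using this
        apply hpq
        rw [← hpcast, ← hqcast, hj0, hj2, hjunc i'', hmod (i'' + 1) 0, hi2]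
      · refine htwo i'' i hi''lt hilt (Ne.symm hii)
          (v (((k-1) * i'' + j'' : ℕ) : ZMod ((k-1) * m)))
          (v (((k-1) * i'' + (k-1) : ℕ) : ZMod ((k-1) * m)))
          (memB i'' j'' (by omega)) ?_ (memB i'' (k-1) (by omega)) ?_ ?_
        · rw [← hxq]
          exact memB i j (by omega)
        · rw [hjunc i'', hmod (i'' + 1) 0, hi2]
          exact memB i 0 (by omega)
        · intro hcon
          have := binj i'' ⟨j'', by omega⟩ ⟨k-1, by omega⟩ hcon
          simp [Fin.ext_iff] at this
          omega
    have hd2 : 2 ≤ d := by omega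
    have hdm2 : d ≤ m - 2 := by omega
    -- the shorter closed walk
    have hL : 0 < (k-1) * (d + 1) := Nat.mul_pos (by omega) (by omega)
    haveI : NeZero ((k-1) * (d + 1)) := ⟨hL.ne'⟩
    set τ : ℕ → Equiv.Perm (Fin k) := fun t =>
      if t = 0 then Equiv.swap ⟨0, by omega⟩ ⟨j, by omega⟩
      else if t = d then Equiv.swap ⟨k-1, by omega⟩ ⟨j'', by omega⟩
      else 1 with hτ
    set f : ℕ → ℕ := fun r =>
      (k-1) * (i + r / (k-1)) +
        (if r / (k-1) = 0 then (if r % (k-1) = 0 then j else if r % (k-1) = j then 0 else r % (k-1))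
         else if r / (k-1) = d then (if r % (k-1) = j'' then (k-1) else r % (k-1))
         else r % (k-1)) with hf
    set v' : ZMod ((k-1) * (d + 1)) → V := fun r => v ((f r.val : ℕ) : ZMod ((k-1) * m)) with hv'
    have key : ∀ t : ℕ, t ≤ d → ∀ s : Fin k,
        v' (((k-1) * t + (s : ℕ) : ℕ) : ZMod ((k-1) * (d + 1)))
          = v (((k-1) * (i + t) + ((τ t s : Fin k) : ℕ) : ℕ) : ZMod ((k-1) * m)) := by
      intro t ht s
      have hsk : (s : ℕ) < k := s.isLt
      rcases Nat.lt_or_ge (s : ℕ) (k-1) with hs | hs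
      · -- s is an interior position of the block
        have hlt : (k-1) * t + (s : ℕ) < (k-1) * (d + 1) := by
          have h1 := Nat.mul_le_mul_left (k-1) (show t + 1 ≤ d + 1 by omega)
          rw [Nat.mul_succ] at h1
          omega
        simp only [hv']
        rw [ZMod.val_cast_of_lt hlt]
        have hdiv : ((k-1) * t + (s : ℕ)) / (k-1) = t := by
          rw [Nat.mul_add_div (by omega), Nat.div_eq_of_lt hs, Nat.add_zero]
        have hmod' : ((k-1) * t + (s : ℕ)) % (k-1) = (s : ℕ) := by
          rw [Nat.mul_add_mod]
          exact Nat.mod_eq_of_lt hs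
        simp only [hf, hdiv, hmod']
        suffices hsf : (if t = 0 then (if (s:ℕ) = 0 then j else if (s:ℕ) = j then 0 else (s:ℕ))
            else if t = d then (if (s:ℕ) = j'' then (k-1) else (s:ℕ))
            else (s:ℕ)) = ((τ t s : Fin k) : ℕ) by rw [hsf]
        simp only [hτ]
        by_cases ht0 : t = 0
        · rw [if_pos ht0, if_pos ht0, swap_val]
        · by_cases htd : t = d
          · rw [if_neg ht0, if_neg ht0, if_pos htd, if_pos htd, swap_val]
            split_ifs <;> omega
          · rw [if_neg ht0, if_neg ht0, if_neg htd, if_neg htd]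
            rfl
      · -- s = k-1 : the junction position
        have hs' : (s : ℕ) = k-1 := by omega
        have heq : (k-1) * t + (s : ℕ) = (k-1) * (t + 1) := by rw [hs', Nat.mul_succ]
        rcases Nat.lt_or_ge t d with htd | htd
        · -- interior junction
          have hlt : (k-1) * (t + 1) < (k-1) * (d + 1) := by
            have h1 := Nat.mul_le_mul_left (k-1) (show t + 1 + 1 ≤ d + 1 by omega)
            rw [Nat.mul_succ ((k-1)) (t+1)] at h1
            omega
          simp only [hv']
          rw [heq, ZMod.val_cast_of_lt hlt]
          have hdiv : ((k-1) * (t + 1)) / (k-1) = t + 1 := Nat.mul_div_cancel_left _ (by omega)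
          have hmod' : ((k-1) * (t + 1)) % (k-1) = 0 := Nat.mul_mod_right _ _
          simp only [hf, hdiv, hmod']
          rw [if_neg (Nat.succ_ne_zero t)]
          have hbody : (if t + 1 = d then (if (0:ℕ) = j'' then (k-1) else 0)
              else (0:ℕ)) = 0 := by
            by_cases h2 : t + 1 = d
            · rw [if_pos h2, if_neg (show ¬((0:ℕ) = j'') by omega)]
            · rw [if_neg h2]
          rw [hbody]
          have hτv : ((τ t s : Fin k) : ℕ) = k-1 := by
            simp only [hτ]
            by_cases ht0 : t = 0
            · rw [if_pos ht0, swap_val]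
              split_ifs <;> omega
            · rw [if_neg ht0, if_neg (show t ≠ d by omega)]
              simpa using hs'
          rw [hτv]
          rw [show (k-1) * (i + (t+1)) + 0 = (k-1) * (i + t) + (k-1) from by ring]
        · -- wrap-around junction: closes the cycle through the repeated vertex
          have htd' : t = d := by omega
          have heq2 : (((k-1) * t + (s : ℕ) : ℕ) : ZMod ((k-1) * (d+1))) = 0 := by
            rw [heq, htd']
            exact_mod_cast ZMod.natCast_self ((k-1) * (d+1))
          simp only [hv']
          rw [heq2, ZMod.val_zero]
          have hf0 : f 0 = (k-1) * i + j := by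
            simp only [hf]
            norm_num
          rw [hf0]
          have hτv : ((τ t s : Fin k) : ℕ) = j'' := by
            simp only [hτ]
            rw [htd', if_neg (show d ≠ 0 by omega), if_pos rfl, swap_val]
            split_ifs <;> omega
          rw [hτv, htd']
          rw [hxq]
          congr 1
          rw [hmod (i + d) j'', hd0]
    -- the blocks of the new walk
    have himage : ∀ t : Fin (d + 1),
        (Finset.univ.image fun s : Fin k =>
          v' (((k-1) * (t : ℕ) + (s : ℕ) : ℕ) : ZMod ((k-1) * (d + 1))))
          = B ((i + (t : ℕ)) % m) := by
      intro t
      have ht : (t : ℕ) ≤ d := Nat.lt_succ_iff.mp t.isLt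
      have he : (fun s : Fin k =>
            v' (((k-1) * (t : ℕ) + (s : ℕ) : ℕ) : ZMod ((k-1) * (d + 1))))
          = (fun u : Fin k =>
              v (((k-1) * (i + (t : ℕ)) + (u : ℕ) : ℕ) : ZMod ((k-1) * m)))
            ∘ (τ (t : ℕ)) := by
        funext s
        exact key (t : ℕ) ht s
      rw [he, ← Finset.image_image]
      rw [show Finset.univ.image (⇑(τ (t : ℕ))) = Finset.univ from by simp]
      have he2 : (fun u : Fin k =>
            v (((k-1) * (i + (t : ℕ)) + (u : ℕ) : ℕ) : ZMod ((k-1) * m)))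
          = fun u : Fin k =>
            v (((k-1) * ((i + (t : ℕ)) % m) + (u : ℕ) : ℕ) : ZMod ((k-1) * m)) := by
        funext u; rw [hmod]
      rw [he2]
    have hseq' : ∀ t : Fin (d + 1),
        (Finset.univ.image fun s : Fin k =>
          v' (((k-1) * (t : ℕ) + (s : ℕ) : ℕ) : ZMod ((k-1) * (d + 1)))) ∈ E := by
      intro t
      rw [himage t]
      exact hBseq _
    have hdist' : ∀ t t' : Fin (d + 1), t ≠ t' →
        (Finset.univ.image fun s : Fin k =>
          v' (((k-1) * (t : ℕ) + (s : ℕ) : ℕ) : ZMod ((k-1) * (d + 1))))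
          ≠ (Finset.univ.image fun s : Fin k =>
            v' (((k-1) * (t' : ℕ) + (s : ℕ) : ℕ) : ZMod ((k-1) * (d + 1)))) := by
      intro t t' hne
      rw [himage t, himage t']
      apply hBdist _ _ (Nat.mod_lt _ (by omega)) (Nat.mod_lt _ (by omega))
      intro hcon
      have h1 : (t : ℕ) ≡ (t' : ℕ) [MOD m] :=
        Nat.ModEq.add_left_cancel' i (hcon : (i + (t : ℕ)) % m = (i + (t' : ℕ)) % m)
      have h2 : (t : ℕ) % m = (t' : ℕ) % m := h1
      rw [Nat.mod_eq_of_lt (by omega : (t : ℕ) < m),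
        Nat.mod_eq_of_lt (by omega : (t' : ℕ) < m)] at h2
      exact hne (Fin.ext h2)
    obtain ⟨l2, hA, hB2, hC⟩ := IH (d + 1) (by omega) (by omega) v' hseq' hdist'
    exact ⟨l2, hA, by omega, hC⟩

end Aux

/-- If a linear `k`-partite `k`-uniform hypergraph contains a cyclic sequence of
`(k-1)m` (not necessarily distinct) vertices whose `m` consecutive blocks of `k`
vertices form `m` pairwise distinct edges, then it has girth at most `m`, i.e. it
contains a loose `ℓ`-cycle for some `3 ≤ ℓ ≤ m`. -/
theorem loose_cycle_from_closed_walk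
    {V : Type*} [Fintype V] [DecidableEq V]
    (k m : ℕ) (hk : 3 ≤ k) (hm : 3 ≤ m)
    (E : Finset (Finset V)) (parts : Fin k → Finset V)
    (hdisj : ∀ i j : Fin k, i ≠ j → Disjoint (parts i) (parts j))
    (hcover : ∀ v : V, ∃ i, v ∈ parts i)
    (hedge : ∀ e ∈ E, ∀ i, (e ∩ parts i).card = 1)
    (hlin : ∀ e ∈ E, ∀ f ∈ E, e ≠ f → (e ∩ f).card ≤ 1)
    (v : ZMod ((k - 1) * m) → V)
    (hseq : ∀ i : Fin m,
      (Finset.univ.image fun j : Fin k =>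
        v ((((k - 1) * (i : ℕ) + (j : ℕ) : ℕ)) : ZMod ((k - 1) * m))) ∈ E)
    (hdistinct : ∀ i i' : Fin m, i ≠ i' →
      (Finset.univ.image fun j : Fin k =>
          v ((((k - 1) * (i : ℕ) + (j : ℕ) : ℕ)) : ZMod ((k - 1) * m)))
        ≠ (Finset.univ.image fun j : Fin k =>
          v ((((k - 1) * (i' : ℕ) + (j : ℕ) : ℕ)) : ZMod ((k - 1) * m)))) :
    ∃ ℓ : ℕ, 3 ≤ ℓ ∧ ℓ ≤ m ∧ HasLooseCycle k E ℓ := by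
  have hcard : ∀ e ∈ E, e.card = k := by
    intro e he
    have hcup : e = Finset.univ.biUnion (fun i : Fin k => e ∩ parts i) := by
      ext x
      simp only [Finset.mem_biUnion, Finset.mem_univ, true_and, Finset.mem_inter]
      constructor
      · intro hx
        obtain ⟨i, hi⟩ := hcover x
        exact ⟨i, hx, hi⟩
      · rintro ⟨i, hx, -⟩
        exact hx
    rw [hcup, Finset.card_biUnion]
    · simp only [hedge e he]
      simp
    · intro i _ j _ hij
      exact (hdisj i j hij).mono Finset.inter_subset_right Finset.inter_subset_right
  exact aux_main k hk E hlin hcard m hm v hseq hdistinct
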